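/- Let G = (V,E) be a finite non-bipartite simple graph and I ⊆ V an independent set such that G∖I is bipartite. Then the contraction G/I is non-bipartite; writing 2ρ−1 for its odd girth (ρ ≥ 2 an integer), for every w ∈ Q^W one has w(I) + OPT(G∖I, w) ≤ (1 + 1/ρ) · OPT(G, w). -/

import Mathlib

open Finset

/-- `C` is a vertex cover of `G`. -/
def IsVC {V : Type*} (G : SimpleGraph V) (C : Finset V) : Prop :=
  ∀ ⦃u v : V⦄, G.Adj u v → u ∈ C ∨ v ∈ C

/-- `OPT G w` : minimum weight of a vertex cover of `G`. -/
noncomputable def OPT {V : Type*} [Fintype V] (G : SimpleGraph V) (w : V → ℝ) : ℝ :=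
  sInf {t : ℝ | ∃ C : Finset V, IsVC G C ∧ t = ∑ v ∈ C, w v}

/-- `LPval G w` : optimal value of the standard vertex cover LP relaxation. -/
noncomputable def LPval {V : Type*} [Fintype V] (G : SimpleGraph V) (w : V → ℝ) : ℝ :=
  sInf {t : ℝ | ∃ x : V → ℝ, (∀ v, 0 ≤ x v) ∧ (∀ ⦃u v : V⦄, G.Adj u v → 1 ≤ x u + x v) ∧
    t = ∑ v, w v * x v}

/-- The graph `G ∖ S` (vertices of `S` kept as isolated vertices). -/
def Gdel {V : Type*} (G : SimpleGraph V) (S : Set V) : SimpleGraph V :=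
  SimpleGraph.fromRel (fun u v => G.Adj u v ∧ u ∉ S ∧ v ∉ S)

open scoped Classical in
/-- Sum of `y` over the set of edges described by `P`. -/
noncomputable def ysum {V : Type*} [Fintype V] [DecidableEq V]
    (y : Sym2 V → ℝ) (P : Sym2 V → Prop) : ℝ :=
  ∑ e : Sym2 V, if P e then y e else 0

/-- `y` is a dual certificate for `w` : a feasible dual solution with `y(δ(v)) = w v`. -/
def IsDualCert {V : Type*} [Fintype V] [DecidableEq V] (G : SimpleGraph V)
    (w : V → ℝ) (y : Sym2 V → ℝ) : Prop :=
  (∀ e, 0 ≤ y e) ∧ (∀ e, e ∉ G.edgeSet → y e = 0) ∧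
    ∀ v : V, ysum y (fun e => e ∈ G.edgeSet ∧ v ∈ e) = w v

/-- Membership in the polytope `Q^W`. -/
def memQW {V : Type*} [Fintype V] [DecidableEq V] (G : SimpleGraph V) (w : V → ℝ) : Prop :=
  (∀ v, 0 ≤ w v) ∧ (∑ v, w v) = 2 ∧ ∃ y : Sym2 V → ℝ, IsDualCert G w y

/-- `G` has odd girth `n` : it contains an odd cycle of length `n` and no shorter one. -/
def HasOddGirth {V : Type*} (G : SimpleGraph V) (n : ℕ) : Prop :=
  Odd n ∧ (∃ (v : V) (c : G.Walk v v), c.IsCycle ∧ c.length = n) ∧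
    ∀ (v : V) (c : G.Walk v v), c.IsCycle → Odd c.length → n ≤ c.length

/-- The contraction `G / S` of the vertex set `S` to a single new vertex `none`. -/
def contract {V : Type*} (G : SimpleGraph V) (S : Set V) :
    SimpleGraph (Option {v : V // v ∉ S}) :=
  SimpleGraph.fromRel (fun x y =>
    match x, y with
    | some u, some v => G.Adj u.1 v.1
    | some u, none => ∃ s ∈ S, G.Adj u.1 s
    | none, _ => False)

/-- `I` is an independent set of `G`. -/
def IsIndep {V : Type*} (G : SimpleGraph V) (I : Finset V) : Prop :=
  ∀ ⦃u⦄, u ∈ I → ∀ ⦃v⦄, v ∈ I → ¬ G.Adj u v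

/-- The fractional chromatic number of `G`. -/
noncomputable def fracChrom {V : Type*} [Fintype V] [DecidableEq V] (G : SimpleGraph V) : ℝ :=
  sInf {t : ℝ | ∃ y : Finset V → ℝ, (∀ I, 0 ≤ y I) ∧ (∀ I, ¬ IsIndep G I → y I = 0) ∧
    (∀ v : V, 1 ≤ ∑ I : Finset V, if v ∈ I then y I else 0) ∧ t = ∑ I : Finset V, y I}

namespace RB
open SimpleGraph Walk

/-! ### contraction and levels -/

variable {V : Type*} {G : SimpleGraph V} {I : Finset V}

open scoped Classical in
/-- The image of a vertex in the contraction. -/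
noncomputable def vt (I : Finset V) (v : V) : Option {u : V // u ∉ (↑I : Set V)} :=
  if h : v ∈ (↑I : Set V) then none else some ⟨v, h⟩

lemma vt_mem (v : V) (h : v ∈ I) : vt I v = none := by
  simp [vt, h]

lemma vt_not_mem (v : V) (h : v ∉ I) : vt I v = some ⟨v, h⟩ := by
  simp [vt, h]

lemma contract_adj_some {a b : V} (ha : a ∉ I) (hb : b ∉ I) (hab : G.Adj a b) :
    (contract G ↑I).Adj (vt I a) (vt I b) := by
  rw [vt_not_mem a ha, vt_not_mem b hb]
  refine ⟨by simp [hab.ne], Or.inl ?_⟩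
  exact hab

lemma contract_adj_none {a b : V} (ha : a ∈ I) (hb : b ∉ I) (hab : G.Adj a b) :
    (contract G ↑I).Adj none (vt I b) := by
  rw [vt_not_mem b hb]
  exact ⟨by simp, Or.inr ⟨a, by simpa using ha, hab.symm⟩⟩

/-- The level of a vertex : its distance from the contracted vertex in `G/I`. -/
noncomputable def lvl (G : SimpleGraph V) (I : Finset V) (v : V) : ℕ∞ :=
  (contract G ↑I).edist none (vt I v)

lemma lvl_eq_zero_iff {v : V} : lvl G I v = 0 ↔ v ∈ I := by
  rw [lvl, SimpleGraph.edist_eq_zero_iff]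
  constructor
  · intro h
    by_contra hv
    rw [vt_not_mem v hv] at h
    simp at h
  · intro h; rw [vt_mem v h]

lemma lvl_adj {a b : V} (hab : G.Adj a b) : lvl G I b ≤ lvl G I a + 1 := by
  by_cases hb : b ∈ I
  · simp [lvl_eq_zero_iff.mpr hb]
  by_cases ha : a ∈ I
  · have h1 : lvl G I b ≤ 1 := by
      rw [lvl]
      have := SimpleGraph.edist_le (Walk.cons (contract_adj_none ha hb hab) Walk.nil)
      simpa using this
    exact le_trans h1 (by simp)
  · calc lvl G I b ≤ lvl G I a + (contract G ↑I).edist (vt I a) (vt I b) :=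
          SimpleGraph.edist_triangle
    _ ≤ lvl G I a + 1 := by
        gcongr
        have := SimpleGraph.edist_le (Walk.cons (contract_adj_some ha hb hab) Walk.nil)
        simpa using this

lemma lvl_adj_I {a b : V} (ha : a ∈ I) (hb : b ∉ I) (hab : G.Adj a b) : lvl G I b = 1 := by
  have h1 : lvl G I b ≤ 1 := by
    have := lvl_adj (G := G) (I := I) hab
    simpa [lvl_eq_zero_iff.mpr ha] using this
  have h0 : lvl G I b ≠ 0 := fun h => hb (lvl_eq_zero_iff.mp h)
  exact le_antisymm h1 (ENat.one_le_iff_ne_zero.mpr h0)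

end RB
namespace RB
open SimpleGraph Walk

variable {W : Type*} {H : SimpleGraph W}

/-- In a path starting at `x`, any edge incident to `x` is the first edge. -/
lemma start_edge_decomp {x z y : W} {r : H.Walk x z} (hr : r.IsPath)
    (he : s(x, y) ∈ r.edges) : ∃ (h : H.Adj x y) (t : H.Walk y z), r = Walk.cons h t := by
  cases r with
  | nil => simp at he
  | cons h t =>
    rw [Walk.edges_cons, List.mem_cons] at he
    rcases he with he | he
    · rw [Sym2.eq_iff] at he
      rcases he with ⟨-, rfl⟩ | ⟨rfl, rfl⟩
      · exact ⟨h, t, rfl⟩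
      · exact absurd rfl h.ne
    · exact absurd (Walk.fst_mem_support_of_mem_edges t he)
        ((Walk.cons_isPath_iff _ _).mp hr).2

lemma path_self_nil {y : W} {t : H.Walk y y} (ht : t.IsPath) : t.length = 0 := by
  cases t with
  | nil => rfl
  | cons h s =>
    exact absurd (Walk.end_mem_support s) ((Walk.cons_isPath_iff _ _).mp ht).2

/-- Any closed walk of odd length contains an odd cycle of at most the same length. -/
lemma exists_odd_cycle_of_odd_closed_walk :
    ∀ n : ℕ, Odd n → ∀ (x : W) (p : H.Walk x x), p.length = n →
      ∃ (z : W) (c : H.Walk z z), c.IsCycle ∧ Odd c.length ∧ c.length ≤ n := by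
  intro n
  induction n using Nat.strong_induction_on with
  | _ n IH =>
    intro hodd x p hlen
    classical
    by_cases hnd : p.support.tail.Nodup
    · -- `p` is already (essentially) a cycle
      cases p with
      | nil =>
        rw [← hlen] at hodd; simp [Nat.odd_iff] at hodd
      | cons h q =>
        rename_i y
        have hq : q.IsPath := by
          rw [Walk.isPath_def]
          simpa using hnd
        by_cases hedge : s(x, y) ∈ q.edges
        · have hrev : q.reverse.IsPath := hq.reverse
          have hedge' : s(x, y) ∈ q.reverse.edges := by
            rw [Walk.edges_reverse, List.mem_reverse]; exact hedge
          obtain ⟨h', t, hteq⟩ := start_edge_decomp hrev hedge'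
          have ht : t.IsPath := by
            rw [hteq] at hrev
            exact ((Walk.cons_isPath_iff _ _).mp hrev).1
          have h1 : q.reverse.length = 1 := by
            rw [hteq, Walk.length_cons, path_self_nil ht]
          have h2 : q.length = 1 := by rwa [Walk.length_reverse] at h1
          rw [← hlen] at hodd
          simp [Walk.length_cons, h2, Nat.odd_iff] at hodd
        · refine ⟨x, Walk.cons h q, ?_, ?_, le_of_eq hlen⟩
          · exact (Walk.cons_isCycle_iff q h).mpr ⟨hq, hedge⟩
          · rw [hlen]; exact hodd
    · obtain ⟨v, hdup⟩ := List.exists_duplicate_iff_not_nodup.mpr hnd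
      have hcnt2 : 2 ≤ p.support.tail.count v := List.duplicate_iff_two_le_count.mp hdup
      have hvtail : v ∈ p.support.tail := hdup.mem
      have hv : v ∈ p.support := List.mem_of_mem_tail hvtail
      set A := p.takeUntil v hv with hA
      set B := p.dropUntil v hv with hB
      have hspec : A.append B = p := Walk.take_spec p hv
      have hsupp : p.support = A.support ++ B.support.tail := by
        rw [← hspec, Walk.support_append]
      have countA : A.support.count v = 1 := Walk.count_support_takeUntil_eq_one p hv
      have hxcons : p.support = x :: p.support.tail := Walk.support_eq_cons p
      have hcntp : p.support.count v = 1 + B.support.tail.count v := by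
        rw [hsupp, List.count_append, countA]
      have hcntp2 : p.support.tail.count v ≤ p.support.count v :=
        (List.tail_sublist p.support).count_le v
      have hBt : 1 ≤ B.support.tail.count v := by omega
      cases hBne : B with
      | nil =>
        rw [hBne] at hBt; simp at hBt
      | cons hB2 s =>
        rename_i v2
        have hvs : v ∈ s.support := by
          have hts : B.support.tail = s.support := by
            rw [hBne, Walk.support_cons, List.tail_cons]
          rw [hts] at hBt
          exact List.count_pos_iff.mp (by omega)
        have hssplit : (s.takeUntil v hvs).append (s.dropUntil v hvs) = s :=
          Walk.take_spec s hvs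
        set mid : H.Walk v v := Walk.cons hB2 (s.takeUntil v hvs) with hmid
        set outer : H.Walk x x := A.append (s.dropUntil v hvs) with houter
        have hlsum : mid.length + outer.length = n := by
          have h1 : A.length + B.length = n := by
            rw [← hlen, ← hspec, Walk.length_append]
          have h2 : B.length = s.length + 1 := by rw [hBne, Walk.length_cons]
          have h3 : (s.takeUntil v hvs).length + (s.dropUntil v hvs).length = s.length := by
            rw [← Walk.length_append, hssplit]
          rw [hmid, houter, Walk.length_cons, Walk.length_append]
          omega
        have hmidpos : 1 ≤ mid.length := by rw [hmid, Walk.length_cons]; omega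
        have houterpos : 1 ≤ outer.length := by
          by_contra hcon
          push_neg at hcon
          have h0 : A.length + (s.dropUntil v hvs).length = 0 := by
            have := hcon; rw [houter, Walk.length_append] at this; omega
          have hA0 : A.length = 0 := by omega
          have hd0 : (s.dropUntil v hvs).length = 0 := by omega
          have hvx : v = x := (Walk.eq_of_length_eq_zero hA0).symm
          have hcs : s.support.count v = (s.takeUntil v hvs).support.count v
              + (s.dropUntil v hvs).support.tail.count v := by
            conv_lhs => rw [← hssplit]
            rw [Walk.support_append, List.count_append]
          have htail0 : (s.dropUntil v hvs).support.tail.length = 0 := by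
            have hls := Walk.length_support (s.dropUntil v hvs)
            have hls1 : (s.dropUntil v hvs).support.length = 1 := by omega
            have hcons := Walk.support_eq_cons (s.dropUntil v hvs)
            rw [hcons] at hls1
            simpa using hls1
          have hcs1 : s.support.count v = 1 := by
            rw [hcs, Walk.count_support_takeUntil_eq_one s hvs]
            rw [List.length_eq_zero_iff] at htail0
            rw [htail0]
            simp
          have hts : B.support.tail = s.support := by
            rw [hBne, Walk.support_cons, List.tail_cons]
          have hpx : p.support.count v = p.support.tail.count v + 1 := by
            rw [hxcons, hvx]
            simp only [List.tail_cons, List.count_cons_self]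
          rw [hcntp, hts, hcs1] at hpx
          omega
        rcases Nat.even_or_odd mid.length with hme | hmo
        · have houo : Odd outer.length := by
            rcases hodd with ⟨t1, ht1⟩
            rcases hme with ⟨u1, hu1⟩
            exact ⟨t1 - u1, by omega⟩
          obtain ⟨z, c, hc1, hc2, hc3⟩ := IH outer.length (by omega) houo x outer rfl
          exact ⟨z, c, hc1, hc2, by omega⟩
        · obtain ⟨z, c, hc1, hc2, hc3⟩ := IH mid.length (by omega) hmo v mid rfl
          exact ⟨z, c, hc1, hc2, by omega⟩

/-- If two adjacent vertices have the same finite distance `m` from `r`,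
then the graph has an odd cycle of length at most `2m+1`. -/
lemma odd_girth_le_of_adj_same_dist {n : ℕ} (hog : HasOddGirth H n) {r a b : W}
    (hab : H.Adj a b) {m : ℕ} (hdista : H.edist r a = m) (hdistb : H.edist r b = m) :
    n ≤ 2 * m + 1 := by
  obtain ⟨p, hp⟩ := SimpleGraph.exists_walk_of_edist_eq_coe hdista
  obtain ⟨q, hq⟩ := SimpleGraph.exists_walk_of_edist_eq_coe hdistb
  have hlen : (p.append (Walk.cons hab q.reverse)).length = 2 * m + 1 := by
    rw [Walk.length_append, Walk.length_cons, Walk.length_reverse, hp, hq]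
    omega
  obtain ⟨z, c, hc, hcodd, hcle⟩ := exists_odd_cycle_of_odd_closed_walk (2 * m + 1)
    ⟨m, by omega⟩ r (p.append (Walk.cons hab q.reverse)) hlen
  exact le_trans (hog.2.2 z c hc hcodd) hcle

end RB
namespace RB
open SimpleGraph

variable {V : Type*} [Fintype V] [DecidableEq V] {G : SimpleGraph V} {I : Finset V}

lemma lvl_horiz {ρ : ℕ} (hog : HasOddGirth (contract G ↑I) (2 * ρ - 1))
    {a b : V} (ha : a ∉ I) (hb : b ∉ I) (hab : G.Adj a b) {m : ℕ}
    (hma : lvl G I a = m) (hmb : lvl G I b = m) : ρ - 1 ≤ m := by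
  have := odd_girth_le_of_adj_same_dist hog (contract_adj_some ha hb hab) hma hmb
  omega

lemma OPT_le {w : V → ℝ} (hw0 : ∀ v, 0 ≤ w v) {G : SimpleGraph V} {C : Finset V}
    (hC : IsVC G C) : OPT G w ≤ ∑ v ∈ C, w v := by
  apply csInf_le
  · refine ⟨0, ?_⟩
    rintro t ⟨C', -, rfl⟩
    exact Finset.sum_nonneg fun v _ => hw0 v
  · exact ⟨C, hC, rfl⟩

lemma OPT_ge {w : V → ℝ} {G : SimpleGraph V} {r : ℝ}
    (h : ∀ C : Finset V, IsVC G C → r ≤ ∑ v ∈ C, w v) : r ≤ OPT G w := by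
  apply le_csInf
  · exact ⟨_, Finset.univ, fun u v _ => Or.inl (Finset.mem_univ u), rfl⟩
  · rintro t ⟨C, hC, rfl⟩
    exact h C hC

open scoped Classical in
/-- Sum over edges of `G` of `y e * f e`. -/
noncomputable def esum (G : SimpleGraph V) (y : Sym2 V → ℝ) (f : Sym2 V → ℝ) : ℝ :=
  ∑ e : Sym2 V, if e ∈ G.edgeSet then y e * f e else 0

open scoped Classical in
/-- Number of endpoints of `e` lying in `S`, as a real number. -/
noncomputable def cnt (S : Finset V) (e : Sym2 V) : ℝ := ((S.filter (· ∈ e)).card : ℝ)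

lemma cnt_pair {S : Finset V} {a b : V} (hab : a ≠ b) :
    cnt S s(a, b) = (if a ∈ S then (1:ℝ) else 0) + (if b ∈ S then 1 else 0) := by
  classical
  rw [cnt]
  have hfe : S.filter (· ∈ s(a, b)) = S.filter (fun v => v = a ∨ v = b) := by
    apply Finset.filter_congr; intro v _; simp [Sym2.mem_iff]
  rw [hfe, Finset.filter_or, Finset.filter_eq', Finset.filter_eq']
  by_cases ha : a ∈ S <;> by_cases hb : b ∈ S <;> simp [ha, hb, hab]
  norm_num

lemma wsum_eq {y : Sym2 V → ℝ} {w : V → ℝ}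
    (hyv : ∀ v, ysum y (fun e => e ∈ G.edgeSet ∧ v ∈ e) = w v) (S : Finset V) :
    ∑ v ∈ S, w v = esum G y (cnt S) := by
  classical
  have h1 : ∑ v ∈ S, w v = ∑ v ∈ S, ysum y (fun e => e ∈ G.edgeSet ∧ v ∈ e) :=
    Finset.sum_congr rfl fun v _ => (hyv v).symm
  rw [h1]
  simp only [ysum]
  rw [Finset.sum_comm, esum]
  refine Finset.sum_congr rfl fun e _ => ?_
  by_cases he : e ∈ G.edgeSet
  · simp only [he, true_and, if_true]
    rw [cnt, ← Finset.sum_filter, Finset.sum_const, nsmul_eq_mul, mul_comm]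
  · simp [he]

lemma card_evens : ∀ n : ℕ, ((Finset.range n).filter (fun k => k % 2 = 0)).card = (n + 1) / 2 := by
  intro n
  induction n with
  | zero => simp
  | succ n ih =>
    rw [Finset.range_add_one, Finset.filter_insert]
    split
    · rw [Finset.card_insert_of_notMem (fun hmem => by
        simpa using Finset.mem_of_mem_filter n hmem), ih]
      rename_i h
      omega
    · rw [ih]
      rename_i h
      omega

open scoped Classical in
/-- The alternating-levels set. -/
noncomputable def MkS (G : SimpleGraph V) (I : Finset V) (k : ℕ) : Finset V :=
  Finset.univ.filter (fun v => v ∉ I ∧ lvl G I v ≤ (k : ℕ∞) ∧ (lvl G I v).toNat % 2 = k % 2)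

open scoped Classical in
/-- Vertices of level greater than `k`. -/
noncomputable def GtS (G : SimpleGraph V) (I : Finset V) (k : ℕ) : Finset V :=
  Finset.univ.filter (fun v => (k : ℕ∞) < lvl G I v)

lemma fin2_cases (x y i : Fin 2) (h : x ≠ y) : x = i ∨ y = i := by
  revert x y i h; decide

lemma gdel_adj {S : Set V} {a b : V} (h : (Gdel G S).Adj a b) :
    G.Adj a b ∧ a ∉ S ∧ b ∉ S := by
  obtain ⟨-, hrel⟩ := h
  rcases hrel with ⟨h1, h2, h3⟩ | ⟨h1, h2, h3⟩
  · exact ⟨h1, h2, h3⟩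
  · exact ⟨h1.symm, h3, h2⟩

lemma cover_lemma {ρ : ℕ} (hog : HasOddGirth (contract G ↑I) (2 * ρ - 1))
    (c : (Gdel G ↑I).Coloring (Fin 2)) {k : ℕ} (hk : k ≤ ρ - 1) (i : Fin 2) :
    IsVC (Gdel G ↑I) (MkS G I k ∪ (GtS G I k).filter (fun v => c v = i)) := by
  classical
  intro a b hab
  obtain ⟨hGab, ha, hb⟩ := gdel_adj hab
  have haI : a ∉ I := by simpa using ha
  have hbI : b ∉ I := by simpa using hb
  by_cases hgt : (k : ℕ∞) < lvl G I a ∧ (k : ℕ∞) < lvl G I b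
  · have hcab : c a ≠ c b := c.valid hab
    rcases fin2_cases (c a) (c b) i hcab with hc | hc
    · exact Or.inl (Finset.mem_union_right _ (Finset.mem_filter.mpr
        ⟨Finset.mem_filter.mpr ⟨Finset.mem_univ a, hgt.1⟩, hc⟩))
    · exact Or.inr (Finset.mem_union_right _ (Finset.mem_filter.mpr
        ⟨Finset.mem_filter.mpr ⟨Finset.mem_univ b, hgt.2⟩, hc⟩))
  · have hkey : ∀ u u' : V, u ∉ I → u' ∉ I → G.Adj u u' → lvl G I u ≤ (k : ℕ∞) →
        u ∈ MkS G I k ∨ u' ∈ MkS G I k := by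
      intro u u' hu hu' huu' hul
      have hmemMk : ∀ (x : V), x ∉ I → ∀ j : ℕ, lvl G I x = j → j ≤ k → j % 2 = k % 2 →
          x ∈ MkS G I k := by
        intro x hx j hj hjk hjp
        refine Finset.mem_filter.mpr ⟨Finset.mem_univ x, hx, ?_, ?_⟩
        · rw [hj]; exact_mod_cast hjk
        · rw [hj]; simpa using hjp
      have hultop : lvl G I u ≠ ⊤ := by
        intro h; rw [h] at hul; exact absurd hul (by simp)
      obtain ⟨m, hm⟩ := WithTop.ne_top_iff_exists.mp hultop
      have hm' : lvl G I u = (m : ℕ∞) := hm.symm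
      have hmk : m ≤ k := by rw [hm'] at hul; exact_mod_cast hul
      have hm1 : 1 ≤ m := by
        rcases Nat.eq_zero_or_pos m with h0 | h1
        · exact absurd (lvl_eq_zero_iff.mp (by rw [hm', h0]; rfl)) hu
        · exact h1
      have hu'le : lvl G I u' ≤ ((m + 1 : ℕ) : ℕ∞) := by
        have h2 := lvl_adj (G := G) (I := I) huu'
        rw [hm'] at h2
        push_cast
        exact h2
      have hu'top : lvl G I u' ≠ ⊤ := by
        intro h; rw [h, top_le_iff] at hu'le; exact ENat.coe_ne_top _ hu'le
      obtain ⟨n, hn⟩ := WithTop.ne_top_iff_exists.mp hu'top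
      have hn' : lvl G I u' = (n : ℕ∞) := hn.symm
      have hnm : n ≤ m + 1 := by rw [hn'] at hu'le; exact_mod_cast hu'le
      have hn1 : 1 ≤ n := by
        rcases Nat.eq_zero_or_pos n with h0 | h1
        · exact absurd (lvl_eq_zero_iff.mp (by rw [hn', h0]; rfl)) hu'
        · exact h1
      have hmn : m ≤ n + 1 := by
        have h2 := lvl_adj (G := G) (I := I) huu'.symm
        rw [hm', hn'] at h2
        exact_mod_cast h2
      by_cases heq : m = n
      · have hhor : ρ - 1 ≤ m := lvl_horiz hog hu hu' huu' hm' (by rw [hn', heq])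
        exact Or.inl (hmemMk u hu m hm' hmk (by omega))
      · have hpar : (m ≤ k ∧ m % 2 = k % 2) ∨ (n ≤ k ∧ n % 2 = k % 2) := by omega
        rcases hpar with ⟨h1, h2⟩ | ⟨h1, h2⟩
        · exact Or.inl (hmemMk u hu m hm' h1 h2)
        · exact Or.inr (hmemMk u' hu' n hn' h1 h2)
    rw [not_and_or] at hgt
    push_neg at hgt
    rcases hgt with hgt | hgt
    · rcases hkey a b haI hbI hGab hgt with hmem | hmem
      · exact Or.inl (Finset.mem_union_left _ hmem)
      · exact Or.inr (Finset.mem_union_left _ hmem)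
    · rcases hkey b a hbI haI hGab.symm hgt with hmem | hmem
      · exact Or.inr (Finset.mem_union_left _ hmem)
      · exact Or.inl (Finset.mem_union_left _ hmem)

end RB
namespace RB
open SimpleGraph

variable {V : Type*} [Fintype V] [DecidableEq V] {G : SimpleGraph V} {I : Finset V}
variable {y : Sym2 V → ℝ}

lemma edge_rec {P : Sym2 V → Prop} (h : ∀ a b, G.Adj a b → P s(a, b)) :
    ∀ e ∈ G.edgeSet, P e := by
  intro e he
  induction e with
  | _ a b => exact h a b ((SimpleGraph.mem_edgeSet G).mp he)

lemma esum_congr {f g : Sym2 V → ℝ} (h : ∀ e ∈ G.edgeSet, f e = g e) :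
    esum G y f = esum G y g := by
  classical
  rw [esum, esum]
  refine Finset.sum_congr rfl fun e _ => ?_
  by_cases he : e ∈ G.edgeSet
  · simp only [he, if_true, h e he]
  · simp [he]

lemma esum_le (hy0 : ∀ e, 0 ≤ y e) {f g : Sym2 V → ℝ} (h : ∀ e ∈ G.edgeSet, f e ≤ g e) :
    esum G y f ≤ esum G y g := by
  classical
  rw [esum, esum]
  refine Finset.sum_le_sum fun e _ => ?_
  by_cases he : e ∈ G.edgeSet
  · simp only [he, if_true]
    exact mul_le_mul_of_nonneg_left (h e he) (hy0 e)
  · simp [he]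

lemma esum_const (r : ℝ) : esum G y (fun _ => r) = r * esum G y (fun _ => 1) := by
  classical
  rw [esum, esum, Finset.mul_sum]
  refine Finset.sum_congr rfl fun e _ => ?_
  by_cases he : e ∈ G.edgeSet <;> simp [he] <;> ring

lemma esum_comb (f g h : Sym2 V → ℝ) :
    esum G y f + esum G y g + esum G y h / 2
      = esum G y (fun e => f e + g e + h e / 2) := by
  classical
  rw [esum, esum, esum, esum, Finset.sum_div, ← Finset.sum_add_distrib, ← Finset.sum_add_distrib]
  refine Finset.sum_congr rfl fun e _ => ?_
  by_cases he : e ∈ G.edgeSet <;> simp [he] <;> ring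

lemma esum_swap (K : Finset ℕ) (lam : ℕ → ℝ) (f : ℕ → Sym2 V → ℝ) :
    ∑ k ∈ K, lam k * esum G y (f k) = esum G y (fun e => ∑ k ∈ K, lam k * f k e) := by
  classical
  simp only [esum, Finset.mul_sum]
  rw [Finset.sum_comm]
  refine Finset.sum_congr rfl fun e _ => ?_
  by_cases he : e ∈ G.edgeSet
  · simp only [he, if_true, Finset.mul_sum]
    exact Finset.sum_congr rfl fun k _ => by ring
  · simp [he]

/-! ### the weights `lam` -/

noncomputable def lam (ρ k : ℕ) : ℝ := if k = ρ - 1 then 1 / ρ else 2 / ρ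

lemma lam_nonneg (ρ k : ℕ) : 0 ≤ lam ρ k := by
  rw [lam]; split <;> positivity

lemma lam_le {ρ : ℕ} (hρ : 1 ≤ ρ) (k : ℕ) : lam ρ k ≤ 2 / ρ := by
  have h0 : (0:ℝ) < ρ := by exact_mod_cast hρ
  rw [lam]; split
  · rw [div_le_div_iff₀ h0 h0]; nlinarith
  · exact le_refl _

lemma lam_last {ρ : ℕ} : lam ρ (ρ - 1) = 1 / ρ := by rw [lam, if_pos rfl]

lemma lam_sum {ρ : ℕ} (hρ : 2 ≤ ρ) :
    ∑ k ∈ (Finset.range ρ).filter (fun k => k % 2 = 0), lam ρ k = 1 := by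
  classical
  set K := (Finset.range ρ).filter (fun k => k % 2 = 0) with hK
  have h0 : (0:ℝ) < ρ := by exact_mod_cast (by omega : 0 < ρ)
  have hsplit : ∀ k ∈ K, lam ρ k = 2 / ρ - (if k = ρ - 1 then (1:ℝ) / ρ else 0) := by
    intro k _
    rw [lam]; split <;> ring
  rw [Finset.sum_congr rfl hsplit, Finset.sum_sub_distrib, Finset.sum_const,
    Finset.sum_ite_eq' K (ρ - 1), hK, card_evens]
  have hmem : (ρ - 1 ∈ K) ↔ (ρ - 1) % 2 = 0 := by
    rw [hK, Finset.mem_filter, Finset.mem_range]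
    constructor
    · exact fun h => h.2
    · exact fun h => ⟨by omega, h⟩
  rcases Nat.even_or_odd ρ with ⟨m, hm⟩ | ⟨m, hm⟩
  · have hm1 : 1 ≤ m := by omega
    have hc : (ρ + 1) / 2 = m := by omega
    have hnot : ¬(ρ - 1 ∈ K) := by rw [hmem]; omega
    rw [hc, if_neg hnot, hm]
    have hm0 : (m:ℝ) ≠ 0 := by exact_mod_cast (by omega : m ≠ 0)
    rw [nsmul_eq_mul]
    push_cast
    field_simp
    ring
  · have hc : (ρ + 1) / 2 = m + 1 := by omega
    have hyes : ρ - 1 ∈ K := by rw [hmem]; omega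
    rw [hc, if_pos hyes, hm]
    have hm0 : ((2 * m + 1 : ℕ):ℝ) ≠ 0 := by exact_mod_cast (by omega : 2*m+1 ≠ 0)
    rw [nsmul_eq_mul]
    push_cast at hm0 ⊢
    field_simp
    ring

end RB
namespace RB
open SimpleGraph

variable {V : Type*} [Fintype V] [DecidableEq V] {G : SimpleGraph V} {I : Finset V}

lemma mem_MkS_iff {v : V} {k : ℕ} :
    v ∈ MkS G I k ↔ v ∉ I ∧ lvl G I v ≤ (k : ℕ∞) ∧ (lvl G I v).toNat % 2 = k % 2 := by
  classical
  simp [MkS]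

lemma mem_GtS_iff {v : V} {k : ℕ} : v ∈ GtS G I k ↔ (k : ℕ∞) < lvl G I v := by
  classical
  simp [GtS]

lemma mem_MkS_of {v : V} {k j : ℕ} (hv : v ∉ I) (hj : lvl G I v = j) (h1 : j ≤ k)
    (h2 : j % 2 = k % 2) : v ∈ MkS G I k := by
  rw [mem_MkS_iff, hj]
  exact ⟨hv, by exact_mod_cast h1, by simpa using h2⟩

lemma not_mem_MkS_of_gt {v : V} {k j : ℕ} (hj : lvl G I v = j) (h1 : k < j) :
    v ∉ MkS G I k := by
  rw [mem_MkS_iff, hj]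
  push_neg
  intro _ h
  exfalso
  exact absurd (by exact_mod_cast h : j ≤ k) (by omega)

lemma not_mem_MkS_of_parity {v : V} {k j : ℕ} (hj : lvl G I v = j) (h2 : j % 2 ≠ k % 2) :
    v ∉ MkS G I k := by
  rw [mem_MkS_iff, hj]
  push_neg
  intro _ _
  simpa using h2

lemma not_mem_MkS_of_mem {v : V} {k : ℕ} (hv : v ∈ I) : v ∉ MkS G I k := by
  rw [mem_MkS_iff]; push_neg; intro h; exact absurd hv h

lemma mem_GtS_of {v : V} {k j : ℕ} (hj : lvl G I v = j) (h1 : k < j) : v ∈ GtS G I k := by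
  rw [mem_GtS_iff, hj]; exact_mod_cast h1

lemma mem_GtS_top {v : V} {k : ℕ} (hj : lvl G I v = ⊤) : v ∈ GtS G I k := by
  rw [mem_GtS_iff, hj]; exact lt_top_iff_ne_top.mpr (ENat.coe_ne_top k)

lemma not_mem_MkS_top {v : V} {k : ℕ} (hj : lvl G I v = ⊤) : v ∉ MkS G I k := by
  rw [mem_MkS_iff, hj]
  push_neg
  intro _ h
  exact absurd (top_le_iff.mp h) (ENat.coe_ne_top k)

lemma not_mem_GtS_of {v : V} {k j : ℕ} (hj : lvl G I v = j) (h1 : j ≤ k) : v ∉ GtS G I k := by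
  rw [mem_GtS_iff, hj]
  exact not_lt.mpr (by exact_mod_cast h1)

/-- Summing a pointwise bound over `K`. -/
lemma sum_bound_of_pointwise {ρ : ℕ} (hρ : 2 ≤ ρ) (F : ℕ → ℝ) (k₀ : ℕ)
    (h : ∀ k ∈ (Finset.range ρ).filter (fun k => k % 2 = 0),
      lam ρ k * F k ≤ lam ρ k + (if k = k₀ then (1:ℝ) / ρ else 0)) :
    ∑ k ∈ (Finset.range ρ).filter (fun k => k % 2 = 0), lam ρ k * F k ≤ 1 + 1 / ρ := by
  classical
  have h0 : (0:ℝ) ≤ 1 / ρ := by positivity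
  calc ∑ k ∈ (Finset.range ρ).filter (fun k => k % 2 = 0), lam ρ k * F k
      ≤ ∑ k ∈ (Finset.range ρ).filter (fun k => k % 2 = 0),
          (lam ρ k + (if k = k₀ then (1:ℝ) / ρ else 0)) := Finset.sum_le_sum h
    _ = 1 + (if k₀ ∈ (Finset.range ρ).filter (fun k => k % 2 = 0) then (1:ℝ) / ρ else 0) := by
        rw [Finset.sum_add_distrib, lam_sum hρ, Finset.sum_ite_eq']
    _ ≤ 1 + 1 / ρ := by
        apply add_le_add_right
        split
        · exact le_refl _
        · exact h0

lemma one_branch {ρ k k₀ : ℕ} {q : ℝ} (hq : q = 1) :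
    lam ρ k * q ≤ lam ρ k + (if k = k₀ then (1:ℝ) / ρ else 0) := by
  have h1 := lam_nonneg ρ k
  have h2 : (0:ℝ) ≤ (if k = k₀ then (1:ℝ) / ρ else 0) := by
    split
    · positivity
    · exact le_refl _
  rw [hq]
  linarith

/-- Core case : both endpoints outside `I`, finite levels `m ≤ n`. -/
lemma edge_core {ρ : ℕ} (hρ : 2 ≤ ρ) {a b : V} (hab : G.Adj a b)
    (ha : a ∉ I) (hb : b ∉ I) {m n : ℕ}
    (hma : lvl G I a = m) (hmb : lvl G I b = n)
    (hmn : m ≤ n) (hnm : n ≤ m + 1)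
    (hhor : m = n → ρ - 1 ≤ m) :
    ∑ k ∈ (Finset.range ρ).filter (fun k => k % 2 = 0),
      lam ρ k * (cnt I s(a, b) + cnt (MkS G I k) s(a, b) + cnt (GtS G I k) s(a, b) / 2)
      ≤ 1 + 1 / ρ := by
  classical
  have hne := hab.ne
  apply sum_bound_of_pointwise hρ _ m
  intro k hk
  rw [Finset.mem_filter, Finset.mem_range] at hk
  obtain ⟨hkρ, hk2⟩ := hk
  rw [cnt_pair hne, cnt_pair hne, cnt_pair hne, if_neg ha, if_neg hb]
  rcases Nat.lt_trichotomy k m with hkm | hkm | hkm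
  · -- k < m : both endpoints deeper than k
    rw [if_neg (not_mem_MkS_of_gt hma hkm), if_neg (not_mem_MkS_of_gt hmb (by omega)),
      if_pos (mem_GtS_of hma hkm), if_pos (mem_GtS_of hmb (by omega))]
    exact one_branch (by norm_num)
  · -- k = m
    subst hkm
    by_cases hmn2 : k = n
    · -- horizontal edge at level k = ρ - 1
      have hkr : k = ρ - 1 := by have := hhor hmn2; omega
      rw [if_pos (mem_MkS_of ha hma (le_refl k) rfl),
        if_pos (mem_MkS_of hb hmb (by omega) (by omega)),
        if_neg (not_mem_GtS_of hma (le_refl k)), if_neg (not_mem_GtS_of hmb (by omega)),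
        if_pos rfl, hkr, lam_last]
      have h0 : (0:ℝ) ≤ 1 / ρ := by positivity
      nlinarith
    · -- n = k + 1
      have hn : n = k + 1 := by omega
      rw [if_pos (mem_MkS_of ha hma (le_refl k) rfl),
        if_neg (not_mem_MkS_of_gt hmb (by omega)),
        if_neg (not_mem_GtS_of hma (le_refl k)), if_pos (mem_GtS_of hmb (by omega)),
        if_pos rfl]
      have h1 := lam_le (by omega : 1 ≤ ρ) k
      have h4 : 2 / (ρ:ℝ) = 2 * (1 / ρ) := by ring
      have h3 : lam ρ k / 2 ≤ 1 / ρ := by linarith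
      have h5 : lam ρ k * (0 + 0 + (1 + 0) + (0 + 1) / 2) = lam ρ k + lam ρ k / 2 := by ring
      rw [h5]
      linarith
  · -- m < k
    by_cases hmn2 : m = n
    · -- horizontal, impossible : k ≤ ρ-1 ≤ m < k
      have := hhor hmn2
      omega
    · have hn : n = m + 1 := by omega
      by_cases hpm : m % 2 = k % 2
      · -- a is the matching-parity endpoint, k ≥ m + 2
        have hk2' : m + 2 ≤ k := by omega
        rw [if_pos (mem_MkS_of ha hma (by omega) hpm),
          if_neg (not_mem_MkS_of_parity hmb (by omega)),
          if_neg (not_mem_GtS_of hma (by omega)), if_neg (not_mem_GtS_of hmb (by omega))]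
        exact one_branch (by norm_num)
      · -- b is the matching-parity endpoint
        rw [if_neg (not_mem_MkS_of_parity hma hpm),
          if_pos (mem_MkS_of hb hmb (by omega) (by omega)),
          if_neg (not_mem_GtS_of hma (by omega)), if_neg (not_mem_GtS_of hmb (by omega))]
        exact one_branch (by norm_num)

/-- The case `a ∈ I`. -/
lemma edge_bound_I {ρ : ℕ} (hρ : 2 ≤ ρ) {a b : V} (hab : G.Adj a b)
    (ha : a ∈ I) (hb : b ∉ I) :
    ∑ k ∈ (Finset.range ρ).filter (fun k => k % 2 = 0),
      lam ρ k * (cnt I s(a, b) + cnt (MkS G I k) s(a, b) + cnt (GtS G I k) s(a, b) / 2)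
      ≤ 1 + 1 / ρ := by
  classical
  have hne := hab.ne
  have hlb : lvl G I b = 1 := lvl_adj_I ha hb hab
  have hla : lvl G I a = (0 : ℕ) := by
    rw [show ((0:ℕ) : ℕ∞) = 0 from rfl]
    exact lvl_eq_zero_iff.mpr ha
  apply sum_bound_of_pointwise hρ _ 0
  intro k hk
  rw [Finset.mem_filter, Finset.mem_range] at hk
  obtain ⟨hkρ, hk2⟩ := hk
  rw [cnt_pair hne, cnt_pair hne, cnt_pair hne, if_pos ha, if_neg hb,
    if_neg (not_mem_MkS_of_mem ha), if_neg (not_mem_MkS_of_parity hlb (by omega)),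
    if_neg (not_mem_GtS_of hla (by omega))]
  by_cases hk0 : k = 0
  · rw [if_pos (mem_GtS_of hlb (by omega)), if_pos hk0]
    have h1 := lam_le (by omega : 1 ≤ ρ) k
    have h4 : 2 / (ρ:ℝ) = 2 * (1 / ρ) := by ring
    have h3 : lam ρ k / 2 ≤ 1 / ρ := by linarith
    have h5 : lam ρ k * (1 + 0 + (0 + 0) + (0 + 1) / 2) = lam ρ k + lam ρ k / 2 := by ring
    rw [h5]
    linarith
  · rw [if_neg (not_mem_GtS_of hlb (by omega))]
    exact one_branch (by norm_num)

/-- The per-edge bound. -/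
lemma edge_bound {ρ : ℕ} (hρ : 2 ≤ ρ) (hog : HasOddGirth (contract G ↑I) (2 * ρ - 1))
    (hI : IsIndep G I) {a b : V} (hab : G.Adj a b) :
    ∑ k ∈ (Finset.range ρ).filter (fun k => k % 2 = 0),
      lam ρ k * (cnt I s(a, b) + cnt (MkS G I k) s(a, b) + cnt (GtS G I k) s(a, b) / 2)
      ≤ 1 + 1 / ρ := by
  classical
  by_cases haI : a ∈ I
  · by_cases hbI : b ∈ I
    · exact absurd hab (hI haI hbI)
    · exact edge_bound_I hρ hab haI hbI
  · by_cases hbI : b ∈ I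
    · rw [Sym2.eq_swap]
      exact edge_bound_I hρ hab.symm hbI haI
    · by_cases htop : lvl G I a = ⊤
      · have hbtop : lvl G I b = ⊤ := by
          by_contra h
          obtain ⟨n, hn⟩ := WithTop.ne_top_iff_exists.mp h
          have h2 := lvl_adj (G := G) (I := I) hab.symm
          rw [htop, ← hn, top_le_iff] at h2
          have : ((n + 1 : ℕ) : ℕ∞) = ⊤ := by push_cast; exact h2
          exact ENat.coe_ne_top _ this
        apply sum_bound_of_pointwise hρ _ ρ
        intro k hk
        rw [Finset.mem_filter, Finset.mem_range] at hk
        rw [cnt_pair hab.ne, cnt_pair hab.ne, cnt_pair hab.ne, if_neg haI, if_neg hbI,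
          if_neg (not_mem_MkS_top htop), if_neg (not_mem_MkS_top hbtop),
          if_pos (mem_GtS_top htop), if_pos (mem_GtS_top hbtop)]
        exact one_branch (by norm_num)
      · obtain ⟨m, hm⟩ := WithTop.ne_top_iff_exists.mp htop
        have hm' : lvl G I a = (m : ℕ∞) := hm.symm
        have hbtop : lvl G I b ≠ ⊤ := by
          intro h
          have h2 := lvl_adj (G := G) (I := I) hab
          rw [h, hm', top_le_iff] at h2
          have : ((m + 1 : ℕ) : ℕ∞) = ⊤ := by push_cast; exact h2
          exact ENat.coe_ne_top _ this
        obtain ⟨n, hn⟩ := WithTop.ne_top_iff_exists.mp hbtop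
        have hn' : lvl G I b = (n : ℕ∞) := hn.symm
        have hnm : n ≤ m + 1 := by
          have h2 := lvl_adj (G := G) (I := I) hab
          rw [hm', hn'] at h2
          exact_mod_cast h2
        have hmn : m ≤ n + 1 := by
          have h2 := lvl_adj (G := G) (I := I) hab.symm
          rw [hm', hn'] at h2
          exact_mod_cast h2
        have hhor : m = n → ρ - 1 ≤ m := fun h =>
          lvl_horiz hog haI hbI hab hm' (by rw [hn', h])
        rcases le_total m n with h | h
        · exact edge_core hρ hab haI hbI hm' hn' h hnm hhor
        · rw [Sym2.eq_swap]
          exact edge_core hρ hab.symm hbI haI hn' hm' h hmn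
            (fun h2 => by rw [h2]; exact hhor h2.symm)

end RB

/-- for an independent bipartizing set `I`, the contraction `G/I` is
non-bipartite, and if its odd girth is `2ρ-1` then the round-and-bipartize value is at most
`(1 + 1/ρ) · OPT(G,w)` for every `w ∈ Q^W`. -/
theorem round_bipartize_indep_set {V : Type*} [Fintype V] [DecidableEq V]
    (G : SimpleGraph V) (hnb : ¬ G.Colorable 2)
    (I : Finset V) (hI : IsIndep G I) (hbip : (Gdel G ↑I).Colorable 2) :
    ¬ (contract G ↑I).Colorable 2 ∧
      ∀ ρ : ℕ, 2 ≤ ρ → HasOddGirth (contract G ↑I) (2 * ρ - 1) →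
        ∀ w : V → ℝ, memQW G w →
          ∑ v ∈ I, w v + OPT (Gdel G ↑I) w ≤ (1 + 1 / (ρ : ℝ)) * OPT G w := by
  classical
  constructor
  · -- Part 1 : the contraction is non-bipartite
    intro hcol
    obtain ⟨c⟩ := hcol
    apply hnb
    refine ⟨SimpleGraph.Coloring.mk (fun v => c (RB.vt I v)) ?_⟩
    intro u v huv
    show c (RB.vt I u) ≠ c (RB.vt I v)
    by_cases hu : u ∈ I
    · by_cases hv : v ∈ I
      · exact absurd huv (hI hu hv)
      · have hval := c.valid (RB.contract_adj_none hu hv huv)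
        rw [RB.vt_mem u hu]
        exact hval
    · by_cases hv : v ∈ I
      · have hval := c.valid (RB.contract_adj_none hv hu huv.symm)
        rw [RB.vt_mem v hv]
        exact fun h => hval h.symm
      · exact c.valid (RB.contract_adj_some hu hv huv)
  · -- Part 2 : the round-and-bipartize bound
    intro ρ hρ hog w hw
    obtain ⟨cc⟩ := hbip
    obtain ⟨hw0, hw2, y, hy0, hyE, hyv⟩ := hw
    have hρ0 : (0:ℝ) < ρ := by exact_mod_cast (by omega : 0 < ρ)
    have hwsum : ∀ S : Finset V, ∑ v ∈ S, w v = RB.esum G y (RB.cnt S) := RB.wsum_eq hyv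
    have hE2 : RB.esum G y (RB.cnt Finset.univ) = 2 := by rw [← hwsum]; exact hw2
    have hcnt2 : ∀ e ∈ G.edgeSet, RB.cnt (Finset.univ : Finset V) e = 2 := by
      apply RB.edge_rec
      intro a b hab'
      rw [RB.cnt_pair hab'.ne]
      norm_num
    have hE1 : RB.esum G y (fun _ => (1:ℝ)) = 1 := by
      have h2 : RB.esum G y (RB.cnt Finset.univ) = RB.esum G y (fun _ => (2:ℝ)) :=
        RB.esum_congr hcnt2
      rw [hE2, RB.esum_const] at h2
      linarith
    have hOPT1 : (1:ℝ) ≤ OPT G w := by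
      apply RB.OPT_ge
      intro C hC
      have h3 : RB.esum G y (fun _ => (1:ℝ)) ≤ RB.esum G y (RB.cnt C) := by
        apply RB.esum_le hy0
        apply RB.edge_rec
        intro a b hab'
        rw [RB.cnt_pair hab'.ne]
        rcases hC hab' with h | h
        · rw [if_pos h]; split <;> norm_num
        · rw [if_pos h]; split <;> norm_num
      rw [hwsum C, ← hE1]
      exact h3
    set K := (Finset.range ρ).filter (fun k => k % 2 = 0) with hKdef
    have hOPTd : ∀ k ∈ K, OPT (Gdel G ↑I) w
        ≤ ∑ v ∈ RB.MkS G I k, w v + (∑ v ∈ RB.GtS G I k, w v) / 2 := by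
      intro k hk
      rw [hKdef, Finset.mem_filter, Finset.mem_range] at hk
      have hkr : k ≤ ρ - 1 := by omega
      have hle0 := RB.OPT_le hw0 (RB.cover_lemma hog cc hkr 0)
      have hle1 := RB.OPT_le hw0 (RB.cover_lemma hog cc hkr 1)
      have hub : ∀ (s t : Finset V), ∑ v ∈ s ∪ t, w v ≤ ∑ v ∈ s, w v + ∑ v ∈ t, w v := by
        intro s t
        have h4 := Finset.sum_union_inter (s₁ := s) (s₂ := t) (f := w)
        have h5 : 0 ≤ ∑ v ∈ s ∩ t, w v := Finset.sum_nonneg fun v _ => hw0 v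
        linarith
      have hsplitc : ∑ v ∈ (RB.GtS G I k).filter (fun v => cc v = 0), w v
          + ∑ v ∈ (RB.GtS G I k).filter (fun v => cc v = 1), w v
          = ∑ v ∈ RB.GtS G I k, w v := by
        rw [← Finset.sum_filter_add_sum_filter_not (RB.GtS G I k) (fun v => cc v = 0)]
        congr 2
        apply Finset.filter_congr
        intro v _
        have hfin : ∀ x : Fin 2, (x = 1) ↔ ¬(x = 0) := by decide
        simp [hfin]
      have h6 := hub (RB.MkS G I k) ((RB.GtS G I k).filter (fun v => cc v = 0))
      have h7 := hub (RB.MkS G I k) ((RB.GtS G I k).filter (fun v => cc v = 1))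
      linarith
    have hlam1 : ∑ k ∈ K, RB.lam ρ k = 1 := RB.lam_sum hρ
    have hkey : ∀ k ∈ K, ∑ v ∈ I, w v + OPT (Gdel G ↑I) w
        ≤ RB.esum G y (fun e => RB.cnt I e + RB.cnt (RB.MkS G I k) e
            + RB.cnt (RB.GtS G I k) e / 2) := by
      intro k hk
      have h8 := hOPTd k hk
      rw [← RB.esum_comb, ← hwsum, ← hwsum, ← hwsum]
      linarith
    have hchain : ∑ v ∈ I, w v + OPT (Gdel G ↑I) w ≤ 1 + 1/(ρ:ℝ) := by
      calc ∑ v ∈ I, w v + OPT (Gdel G ↑I) w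
          = ∑ k ∈ K, RB.lam ρ k * (∑ v ∈ I, w v + OPT (Gdel G ↑I) w) := by
            rw [← Finset.sum_mul, hlam1, one_mul]
        _ ≤ ∑ k ∈ K, RB.lam ρ k * RB.esum G y (fun e => RB.cnt I e
              + RB.cnt (RB.MkS G I k) e + RB.cnt (RB.GtS G I k) e / 2) := by
            apply Finset.sum_le_sum
            intro k hk
            exact mul_le_mul_of_nonneg_left (hkey k hk) (RB.lam_nonneg ρ k)
        _ = RB.esum G y (fun e => ∑ k ∈ K, RB.lam ρ k * (RB.cnt I e
              + RB.cnt (RB.MkS G I k) e + RB.cnt (RB.GtS G I k) e / 2)) :=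
            RB.esum_swap K (RB.lam ρ) _
        _ ≤ RB.esum G y (fun _ => 1 + 1/(ρ:ℝ)) := by
            apply RB.esum_le hy0
            apply RB.edge_rec
            intro a b hab'
            exact RB.edge_bound hρ hog hI hab'
        _ = (1 + 1/(ρ:ℝ)) * RB.esum G y (fun _ => 1) := RB.esum_const _
        _ = 1 + 1/(ρ:ℝ) := by rw [hE1, mul_one]
    have hpos : (0:ℝ) ≤ 1 + 1/(ρ:ℝ) := by positivity
    calc ∑ v ∈ I, w v + OPT (Gdel G ↑I) w ≤ 1 + 1/(ρ:ℝ) := hchain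
      _ = (1 + 1/(ρ:ℝ)) * 1 := (mul_one _).symm
      _ ≤ (1 + 1/(ρ:ℝ)) * OPT G w := mul_le_mul_of_nonneg_left hOPT1 hpos
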